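/- If β = [0; S̄] where S has odd length and β ∈ E, then β is an isolated point of B(β): there exists ε > 0 such that B(β) ∩ (β, β + ε) = ∅, where one may take the interval (β, S·0) with S·0 = [0;S]. -/

import Mathlib

noncomputable def gauss (x : ℝ) : ℝ := Int.fract x⁻¹

def B (t : ℝ) : Set ℝ := {x ∈ Set.Icc (0:ℝ) 1 | ∀ k : ℕ, t ≤ gauss^[k] x}

def E : Set ℝ := {x ∈ Set.Icc (0:ℝ) 1 | ∀ k : ℕ, x ≤ gauss^[k] x}

noncomputable def cf (S : List ℕ) (x : ℝ) : ℝ :=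
  S.foldr (fun a y => 1 / ((a : ℝ) + y)) x

lemma cf_nil (y : ℝ) : cf [] y = y := rfl

lemma cf_cons (a : ℕ) (S : List ℕ) (y : ℝ) :
    cf (a :: S) y = 1 / ((a : ℝ) + cf S y) := rfl

lemma cf_mem (S : List ℕ) (hpos : ∀ a ∈ S, 1 ≤ a) :
    ∀ y : ℝ, 0 ≤ y → y ≤ 1 → 0 ≤ cf S y ∧ cf S y ≤ 1 := by
  induction S with
  | nil => intro y h0 h1; exact ⟨h0, h1⟩
  | cons a T ih =>
    intro y h0 h1
    have ha : (1:ℝ) ≤ (a:ℝ) := by exact_mod_cast hpos a (List.mem_cons_self (a := a) (l := T))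
    have hT := ih (fun b hb => hpos b (List.mem_cons_of_mem a hb)) y h0 h1
    have hden : (1:ℝ) ≤ (a:ℝ) + cf T y := by linarith [hT.1]
    rw [cf_cons]
    constructor
    · apply div_nonneg (by norm_num) (by linarith)
    · rw [div_le_one (by linarith)]; linarith

lemma cf_pos (S : List ℕ) (hS : S ≠ []) (hpos : ∀ a ∈ S, 1 ≤ a) :
    ∀ y : ℝ, 0 ≤ y → y ≤ 1 → 0 < cf S y := by
  intro y h0 h1
  obtain ⟨a, T, rfl⟩ := List.exists_cons_of_ne_nil hS
  have ha : (1:ℝ) ≤ (a:ℝ) := by exact_mod_cast hpos a (List.mem_cons_self (a := a) (l := T))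
  have hT := cf_mem T (fun b hb => hpos b (List.mem_cons_of_mem a hb)) y h0 h1
  rw [cf_cons]
  apply div_pos (by norm_num) (by linarith [hT.1])

lemma cf_lt_one (S : List ℕ) (hS : S ≠ []) (hpos : ∀ a ∈ S, 1 ≤ a) :
    ∀ y : ℝ, 0 < y → y ≤ 1 → cf S y < 1 := by
  intro y h0 h1
  obtain ⟨a, T, rfl⟩ := List.exists_cons_of_ne_nil hS
  have ha : (1:ℝ) ≤ (a:ℝ) := by exact_mod_cast hpos a (List.mem_cons_self (a := a) (l := T))
  have hTpos : ∀ b ∈ T, 1 ≤ b := fun b hb => hpos b (List.mem_cons_of_mem a hb)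
  have hc : 0 < cf T y := by
    rcases eq_or_ne T [] with h | h
    · rw [h, cf_nil]; exact h0
    · exact cf_pos T h hTpos y h0.le h1
  rw [cf_cons, div_lt_one (by linarith)]
  linarith

lemma cf_mem_Ioo (S : List ℕ) (hpos : ∀ a ∈ S, 1 ≤ a) :
    ∀ y : ℝ, 0 < y → y < 1 → 0 < cf S y ∧ cf S y < 1 := by
  induction S with
  | nil => intro y h0 h1; exact ⟨h0, h1⟩
  | cons a T ih =>
    intro y h0 h1
    have ha : (1:ℝ) ≤ (a:ℝ) := by exact_mod_cast hpos a (List.mem_cons_self (a := a) (l := T))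
    have hT := ih (fun b hb => hpos b (List.mem_cons_of_mem a hb)) y h0 h1
    rw [cf_cons]
    constructor
    · apply div_pos (by norm_num) (by linarith [hT.1])
    · rw [div_lt_one (by linarith [hT.1])]; linarith [hT.1]

lemma gauss_cf (S : List ℕ) (hpos : ∀ a ∈ S, 1 ≤ a) :
    ∀ y : ℝ, 0 < y → y < 1 → gauss^[S.length] (cf S y) = y := by
  induction S with
  | nil => intro y _ _; rfl
  | cons a T ih =>
    intro y h0 h1
    have hTpos : ∀ b ∈ T, 1 ≤ b := fun b hb => hpos b (List.mem_cons_of_mem a hb)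
    have hT := cf_mem_Ioo T hTpos y h0 h1
    have hstep : gauss (cf (a :: T) y) = cf T y := by
      rw [cf_cons, gauss, one_div, inv_inv]
      rw [show ((a:ℝ) + cf T y) = ((a:ℤ):ℝ) + cf T y by push_cast; ring]
      rw [Int.fract_intCast_add]
      exact Int.fract_eq_self.mpr ⟨hT.1.le, hT.2⟩
    rw [List.length_cons, Function.iterate_succ_apply, hstep,
      ih hTpos y h0 h1]

lemma cf_mono (S : List ℕ) (hpos : ∀ a ∈ S, 1 ≤ a) :
    (Even S.length → ∀ y z : ℝ, 0 ≤ y → z ≤ 1 → y < z → cf S y < cf S z) ∧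
    (Odd S.length → ∀ y z : ℝ, 0 ≤ y → z ≤ 1 → y < z → cf S z < cf S y) := by
  induction S with
  | nil =>
    refine ⟨fun _ y z _ _ h => h, fun h => ?_⟩
    simp at h
  | cons a T ih =>
    have hTpos : ∀ b ∈ T, 1 ≤ b := fun b hb => hpos b (List.mem_cons_of_mem a hb)
    have ha : (1:ℝ) ≤ (a:ℝ) := by exact_mod_cast hpos a (List.mem_cons_self (a := a) (l := T))
    obtain ⟨ihe, iho⟩ := ih hTpos
    constructor
    · intro he y z h0 h1 hyz
      have hoT : Odd T.length := by
        rw [List.length_cons, Nat.even_add_one] at he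
        exact Nat.not_even_iff_odd.mp he
      have h := iho hoT y z h0 h1 hyz
      have hmz := cf_mem T hTpos z (by linarith) h1
      rw [cf_cons, cf_cons]
      apply one_div_lt_one_div_of_lt (by linarith [hmz.1]) (by linarith)
    · intro ho y z h0 h1 hyz
      have heT : Even T.length := by
        rw [List.length_cons, Nat.odd_add_one] at ho
        exact Nat.not_odd_iff_even.mp ho
      have h := ihe heT y z h0 h1 hyz
      have hmy := cf_mem T hTpos y h0 (by linarith)
      rw [cf_cons, cf_cons]
      apply one_div_lt_one_div_of_lt (by linarith [hmy.1]) (by linarith)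

lemma cf_continuousOn (S : List ℕ) (hpos : ∀ a ∈ S, 1 ≤ a) :
    ContinuousOn (cf S) (Set.Icc (0:ℝ) 1) := by
  induction S with
  | nil => exact continuousOn_id
  | cons a T ih =>
    have hTpos : ∀ b ∈ T, 1 ≤ b := fun b hb => hpos b (List.mem_cons_of_mem a hb)
    have ha : (1:ℝ) ≤ (a:ℝ) := by exact_mod_cast hpos a (List.mem_cons_self (a := a) (l := T))
    have h := ih hTpos
    have hne : ∀ y ∈ Set.Icc (0:ℝ) 1, (a:ℝ) + cf T y ≠ 0 := by
      intro y hy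
      have := cf_mem T hTpos y hy.1 hy.2
      linarith [this.1]
    show ContinuousOn (fun y => 1 / ((a:ℝ) + cf T y)) (Set.Icc (0:ℝ) 1)
    exact continuousOn_const.div (continuousOn_const.add h) hne

/-- If `β = [0;S̄]` with `|S|` odd and `β ∈ E`, then `β` is isolated from the
right in `B β`. -/
theorem isolated_of_odd_period (S : List ℕ) (hpos : ∀ a ∈ S, 1 ≤ a)
    (hodd : Odd S.length) (β : ℝ) (hβ : β ∈ Set.Icc (0:ℝ) 1)
    (hfix : cf S β = β) (hE : β ∈ E) :
    ∃ ε > 0, B β ∩ Set.Ioo β (β + ε) = ∅ := by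
  have hSne : S ≠ [] := by
    intro h; rw [h] at hodd; simp at hodd
  have hβ0 : 0 < β := by
    rw [← hfix]; exact cf_pos S hSne hpos β hβ.1 hβ.2
  have hβ1 : β < 1 := by
    rw [← hfix]; exact cf_lt_one S hSne hpos β hβ0 hβ.2
  have hanti := (cf_mono S hpos).2 hodd
  have hgt : β < cf S 0 := by
    have := hanti 0 β le_rfl hβ.2 hβ0
    rw [hfix] at this; exact this
  refine ⟨cf S 0 - β, by linarith, ?_⟩
  rw [Set.eq_empty_iff_forall_notMem]
  rintro x ⟨hxB, hx1, hx2⟩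
  have hxk : ∀ k : ℕ, β ≤ gauss^[k] x := hxB.2
  have hx2' : x < cf S 0 := by linarith
  have hcont : ContinuousOn (cf S) (Set.Icc 0 β) :=
    (cf_continuousOn S hpos).mono (Set.Icc_subset_Icc le_rfl hβ1.le)
  have hIVT := intermediate_value_Ioo' (le_of_lt hβ0) hcont
  have hxmem : x ∈ Set.Ioo (cf S β) (cf S 0) := by
    rw [hfix]; exact ⟨hx1, hx2'⟩
  obtain ⟨y, hy, hyx⟩ := hIVT hxmem
  have hiter := gauss_cf S hpos y hy.1 (lt_trans hy.2 hβ1)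
  have hk := hxk S.length
  rw [← hyx, hiter] at hk
  linarith [hy.2]
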